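/- Along any solution of the constant-control pairwise SIS system with u₁, u₂ ≥ 0, the derivative of N·n(t) = 2[SI]+[SS]+[II] equals −2u₁[SI] + u₂((N−[I])(N−[I]−1) − [SS]); in particular, if u₁ = 0 and [SS] ≤ (N−[I])(N−[I]−1), the mean degree is nondecreasing. -/

import Mathlib

/-- Along solutions of the constant-control pairwise SIS system the derivative
of N·n(t) = 2[SI]+[SS]+[II] equals −2u₁[SI] + u₂((N−[I])(N−[I]−1) − [SS]);
in particular, if u₁ = 0 and [SS] ≤ (N−[I])(N−[I]−1) everywhere, the mean
degree is nondecreasing. -/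
theorem mean_degree_derivative (N τ γ u₁ u₂ : ℝ) (hu₁ : 0 ≤ u₁) (hu₂ : 0 ≤ u₂)
    (I SI II SS SSI ISI : ℝ → ℝ)
    (hSI : ∀ t, HasDerivAt SI
      (γ * (II t - SI t) + τ * (SSI t - ISI t - SI t) - u₁ * SI t) t)
    (hII : ∀ t, HasDerivAt II (-2 * γ * II t + 2 * τ * (ISI t + SI t)) t)
    (hSS : ∀ t, HasDerivAt SS (2 * γ * SI t - 2 * τ * SSI t
      + u₂ * ((N - I t) * (N - I t - 1) - SS t)) t) :
    (∀ t, HasDerivAt (fun s => 2 * SI s + SS s + II s)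
        (-2 * u₁ * SI t + u₂ * ((N - I t) * (N - I t - 1) - SS t)) t) ∧
      (u₁ = 0 → (∀ t, SS t ≤ (N - I t) * (N - I t - 1)) →
        Monotone (fun s => 2 * SI s + SS s + II s)) := by
  have hderiv : ∀ t, HasDerivAt (fun s => 2 * SI s + SS s + II s)
      (-2 * u₁ * SI t + u₂ * ((N - I t) * (N - I t - 1) - SS t)) t := by
    intro t
    have h := (((hSI t).const_mul 2).add (hSS t)).add (hII t)
    refine h.congr_deriv ?_
    ring
  refine ⟨hderiv, fun h10 hle => ?_⟩
  subst h10
  apply monotone_of_deriv_nonneg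
  · exact fun t => (hderiv t).differentiableAt
  · intro t
    rw [(hderiv t).deriv]
    have := sub_nonneg.mpr (hle t)
    nlinarith
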